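/- Let K be an infinite language over a finite totally ordered alphabet (Σ, <) such that L := pref(K) satisfies the Setup with Hypotheses (H2) and (H3), and let S be the abstract numeration system built on L = pref(K). If (w⁽ⁿ⁾)_{n≥0} is a sequence of words of K converging to an infinite word w (so that w ∈ adh(L)), then lim_{n→∞} val_S(w⁽ⁿ⁾) / v_{q₀}(|w⁽ⁿ⁾|) = α_w. -/

import Mathlib

open Filter Topology

/-- The prefix of length `ℓ` of an infinite word `w : ℕ → A`. -/
def prefixOf {A : Type*} (w : ℕ → A) (ℓ : ℕ) : List A := List.ofFn (fun i : Fin ℓ => w i)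

/-- The set of prefixes of words of a language `L`. -/
def pref {A : Type*} (L : Set (List A)) : Set (List A) := {u | ∃ v ∈ L, u <+: v}

/-- The adherence of a language. -/
def adh {A : Type*} (L : Set (List A)) : Set (ℕ → A) :=
  {w | ∀ ℓ : ℕ, prefixOf w ℓ ∈ pref L}

/-- The center of a language: the finite prefixes of elements of the adherence. -/
def centre {A : Type*} (L : Set (List A)) : Set (List A) :=
  {u | ∃ w ∈ adh L, u = prefixOf w u.length}

/-- Transition function of a deterministic automaton extended to words. -/
def deltaStar {Q A : Type*} (δ : Q → A → Q) (q : Q) (w : List A) : Q := w.foldl δ q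

/-- `ucomp δ F q n` : number of words of length `n` accepted from state `q`. -/
noncomputable def ucomp {Q A : Type*} (δ : Q → A → Q) (F : Set Q) (q : Q) (n : ℕ) : ℕ :=
  {z : List A | z.length = n ∧ deltaStar δ q z ∈ F}.ncard

/-- `vcomp δ F q n` : number of words of length at most `n` accepted from state `q`. -/
noncomputable def vcomp {Q A : Type*} (δ : Q → A → Q) (F : Set Q) (q : Q) (n : ℕ) : ℕ :=
  ∑ m ∈ Finset.range (n + 1), ucomp δ F q m

open scoped Classical in
/-- For a word `y`, `alphaFin L r y = s₀ + Σ_{x ∈ centre(L), |x| = |y|, x <_lex y} r x`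
where `s₀ = 1 - r ε`.  (Words of length `|y|` are enumerated as `List.ofFn f`
for `f : Fin |y| → A`.) -/
noncomputable def alphaFin {A : Type*} [Fintype A] [LinearOrder A]
    (L : Set (List A)) (r : List A → ℝ) (y : List A) : ℝ :=
  (1 - r []) +
    ∑ f : Fin y.length → A,
      if List.ofFn f ∈ centre L ∧ List.Lex (· < ·) (List.ofFn f) y then r (List.ofFn f)
      else 0

/-- Genealogical (radix) order: first by length, then lexicographically. -/
def genLt {A : Type*} [LinearOrder A] (x y : List A) : Prop :=
  x.length < y.length ∨ (x.length = y.length ∧ List.Lex (· < ·) x y)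

/-- The `S`-numerical value of a word `w` of `L`: the number of words of `L`
genealogically smaller than `w`. -/
noncomputable def valS {A : Type*} [LinearOrder A] (L : Set (List A)) (w : List A) : ℕ :=
  {x ∈ L | genLt x w}.ncard

section Counting

variable {Γ : Type*} [Fintype Γ] [LinearOrder Γ]

/-- counting lists of fixed length by functions -/
lemma ncard_len (n : ℕ) (P : List Γ → Prop) :
    {z : List Γ | z.length = n ∧ P z}.ncard = Nat.card {f : Fin n → Γ // P (List.ofFn f)} := by
  have himg : {z : List Γ | z.length = n ∧ P z}
      = List.ofFn '' {f : Fin n → Γ | P (List.ofFn f)} := by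
    ext z
    constructor
    · rintro ⟨hlen, hz⟩
      refine ⟨fun i : Fin n => z[(i : ℕ)]'(by omega), ?_, ?_⟩
      · simp only [Set.mem_setOf_eq]
        convert hz
        apply List.ext_getElem (by simp [hlen])
        intro i h1 h2
        simp
      · apply List.ext_getElem (by simp [hlen])
        intro i h1 h2
        simp
    · rintro ⟨f, hf, rfl⟩
      exact ⟨by simp, hf⟩
  rw [himg, Set.ncard_image_of_injective _ List.ofFn_injective, ← Nat.card_coe_set_eq]
  rfl

lemma ncard_len_succ (n : ℕ) (P : List Γ → Prop) :
    {z : List Γ | z.length = n + 1 ∧ P z}.ncard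
      = ∑ a : Γ, {z : List Γ | z.length = n ∧ P (a :: z)}.ncard := by
  classical
  rw [ncard_len]
  have e1 : {f : Fin (n+1) → Γ // P (List.ofFn f)}
      ≃ {p : Γ × (Fin n → Γ) // P (p.1 :: List.ofFn p.2)} := by
    refine ((Fin.consEquiv fun _ => Γ).subtypeEquiv fun p => ?_).symm
    have : List.ofFn ((Fin.consEquiv fun _ => Γ) p) = p.1 :: List.ofFn p.2 := by
      rw [List.ofFn_succ]
      simp [Fin.consEquiv]
    rw [this]
  have e2 : {p : Γ × (Fin n → Γ) // P (p.1 :: List.ofFn p.2)}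
      ≃ Σ a : Γ, {g : Fin n → Γ // P (a :: List.ofFn g)} :=
    Equiv.subtypeProdEquivSigmaSubtype fun a g => P (a :: List.ofFn g)
  rw [Nat.card_congr (e1.trans e2)]
  haveI : ∀ a : Γ, Fintype {g : Fin n → Γ // P (a :: List.ofFn g)} := fun a =>
    Subtype.fintype _
  rw [Nat.card_eq_fintype_card, Fintype.card_sigma]
  congr 1
  ext a
  rw [ncard_len, Nat.card_eq_fintype_card]

variable {Q : Type*} (δ : Q → Γ → Q) (F : Set Q)

open scoped Classical in
lemma ucomp_zero (q : Q) : ucomp δ F q 0 = if q ∈ F then 1 else 0 := by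
  unfold ucomp
  split_ifs with h
  · have : {z : List Γ | z.length = 0 ∧ deltaStar δ q z ∈ F} = {[]} := by
      ext z; simp [List.length_eq_zero_iff, deltaStar]
      rintro rfl; simpa [deltaStar] using h
    rw [this, Set.ncard_singleton]
  · have : {z : List Γ | z.length = 0 ∧ deltaStar δ q z ∈ F} = ∅ := by
      ext z; simp [List.length_eq_zero_iff]
      rintro rfl; simpa [deltaStar] using h
    rw [this, Set.ncard_empty]

lemma ucomp_succ (q : Q) (n : ℕ) :
    ucomp δ F q (n + 1) = ∑ a : Γ, ucomp δ F (δ q a) n := by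
  unfold ucomp
  rw [ncard_len_succ]
  congr 1

end Counting

section NltSec

set_option linter.unusedSectionVars false

variable {Γ : Type*} [Fintype Γ] [LinearOrder Γ] {Q : Type*} (δ : Q → Γ → Q) (F : Set Q)

lemma lex_cons_cons_iff {a c : Γ} {l t : List Γ} :
    List.Lex (· < ·) (a :: l) (c :: t) ↔ a < c ∨ (a = c ∧ List.Lex (· < ·) l t) := by
  constructor
  · intro h
    cases h with
    | cons h => exact Or.inr ⟨rfl, h⟩
    | rel h => exact Or.inl h
  · rintro (h | ⟨rfl, h⟩)
    · exact List.Lex.rel h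
    · exact List.Lex.cons h

lemma sum_split {M : Type*} [AddCommMonoid M] (c : Γ) (U : Γ → M) (M0 : M) :
    (∑ a : Γ, if a < c then U a else if a = c then M0 else 0)
      = (∑ a ∈ Finset.univ.filter (· < c), U a) + M0 := by
  rw [Finset.sum_ite]
  congr 1
  rw [Finset.sum_eq_single_of_mem c (by simp)]
  · simp
  · intro b _ hbc
    simp [hbc]

/-- number of accepted words of the same length as `x`, lexicographically smaller. -/
noncomputable def Nlt (q : Q) : List Γ → ℕ
  | [] => 0
  | c :: t =>
      (∑ a ∈ Finset.univ.filter (· < c), ucomp δ F (δ q a) t.length) + Nlt (δ q c) t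

lemma Nlt_eq (q : Q) (x : List Γ) :
    Nlt δ F q x
      = {y : List Γ | y.length = x.length
          ∧ (deltaStar δ q y ∈ F ∧ List.Lex (· < ·) y x)}.ncard := by
  induction x generalizing q with
  | nil =>
    have : {y : List Γ | y.length = ([] : List Γ).length
        ∧ (deltaStar δ q y ∈ F ∧ List.Lex (· < ·) y ([] : List Γ))} = ∅ := by
      ext y; simp
    rw [this, Set.ncard_empty]
    rfl
  | cons c t ih =>
    show (∑ a ∈ Finset.univ.filter (· < c), ucomp δ F (δ q a) t.length) + Nlt δ F (δ q c) t = _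
    have hlen : (c :: t).length = t.length + 1 := rfl
    rw [hlen, ncard_len_succ]
    have hterm : ∀ a : Γ,
        {z : List Γ | z.length = t.length
            ∧ (deltaStar δ q (a :: z) ∈ F ∧ List.Lex (· < ·) (a :: z) (c :: t))}.ncard
          = if a < c then ucomp δ F (δ q a) t.length
            else if a = c then Nlt δ F (δ q c) t else 0 := by
      intro a
      by_cases hac : a < c
      · rw [if_pos hac]
        unfold ucomp
        congr 1
        ext z
        simp only [Set.mem_setOf_eq, and_congr_right_iff]
        intro _
        have : deltaStar δ q (a :: z) = deltaStar δ (δ q a) z := rfl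
        rw [this]
        simp only [lex_cons_cons_iff]
        tauto
      · rw [if_neg hac]
        by_cases haec : a = c
        · subst haec
          rw [if_pos rfl, ih (δ q a)]
          congr 1
          ext z
          simp only [Set.mem_setOf_eq, and_congr_right_iff]
          intro _
          have : deltaStar δ q (a :: z) = deltaStar δ (δ q a) z := rfl
          rw [this]
          simp only [lex_cons_cons_iff, lt_irrefl, false_or, true_and, eq_self_iff_true]
        · rw [if_neg haec]
          have : {z : List Γ | z.length = t.length
              ∧ (deltaStar δ q (a :: z) ∈ F ∧ List.Lex (· < ·) (a :: z) (c :: t))} = ∅ := by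
            ext z
            simp only [Set.mem_setOf_eq, Set.mem_empty_iff_false, iff_false, not_and]
            rintro _ _ hlex
            rw [lex_cons_cons_iff] at hlex
            tauto
          rw [this, Set.ncard_empty]
    calc (∑ a ∈ Finset.univ.filter (· < c), ucomp δ F (δ q a) t.length) + Nlt δ F (δ q c) t
        = ∑ a : Γ, (if a < c then ucomp δ F (δ q a) t.length
            else if a = c then Nlt δ F (δ q c) t else 0) := (sum_split c _ _).symm
      _ = _ := by
          refine Finset.sum_congr rfl fun a _ => ?_
          rw [hterm a]

lemma finite_len_eq (n : ℕ) (P : List Γ → Prop) :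
    {z : List Γ | z.length = n ∧ P z}.Finite := by
  apply Set.Finite.subset (Set.finite_range (List.ofFn : (Fin n → Γ) → List Γ))
  rintro z ⟨hlen, _⟩
  exact ⟨fun i : Fin n => z[(i : ℕ)]'(by omega), by
    apply List.ext_getElem (by simp [hlen])
    intro i h1 h2; simp⟩

lemma finite_len_lt (n : ℕ) (P : List Γ → Prop) :
    {z : List Γ | z.length < n ∧ P z}.Finite := by
  have : {z : List Γ | z.length < n ∧ P z}
      ⊆ ⋃ m ∈ Set.Iio n, {z : List Γ | z.length = m ∧ P z} := by
    rintro z ⟨h1, h2⟩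
    have : z ∈ {z : List Γ | z.length = z.length ∧ P z} := ⟨rfl, h2⟩
    exact Set.mem_biUnion (Set.mem_Iio.2 h1) this
  exact Set.Finite.subset (Set.Finite.biUnion (Set.finite_Iio n)
    fun m _ => finite_len_eq m P) this

lemma ncard_lt_len (L : Set (List Γ)) (q0 : Q) (hL : L = {x | deltaStar δ q0 x ∈ F}) (n : ℕ) :
    {y : List Γ | y.length < n ∧ y ∈ L}.ncard = ∑ m ∈ Finset.range n, ucomp δ F q0 m := by
  induction n with
  | zero => simp
  | succ n ih =>
    have hsplit : {y : List Γ | y.length < n + 1 ∧ y ∈ L}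
        = {y : List Γ | y.length < n ∧ y ∈ L} ∪ {y : List Γ | y.length = n ∧ y ∈ L} := by
      ext y
      simp only [Set.mem_setOf_eq, Set.mem_union, Nat.lt_succ_iff_lt_or_eq]
      tauto
    rw [hsplit, Set.ncard_union_eq ?_ (finite_len_lt n _) (finite_len_eq n _),
      Finset.sum_range_succ, ih]
    · congr 1
      unfold ucomp
      congr 1
      ext y
      rw [hL]
      simp [Set.mem_setOf_eq]
    · rw [Set.disjoint_left]
      rintro y ⟨h1, _⟩ ⟨h2, _⟩
      omega

lemma valS_eq (L : Set (List Γ)) (q0 : Q) (hL : L = {x | deltaStar δ q0 x ∈ F}) (x : List Γ) :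
    valS L x = (∑ m ∈ Finset.range x.length, ucomp δ F q0 m) + Nlt δ F q0 x := by
  have hsplit : {y ∈ L | genLt y x}
      = {y : List Γ | y.length < x.length ∧ y ∈ L}
        ∪ {y : List Γ | y.length = x.length
            ∧ (deltaStar δ q0 y ∈ F ∧ List.Lex (· < ·) y x)} := by
    ext y
    simp only [Set.mem_setOf_eq, Set.mem_union, genLt]
    constructor
    · rintro ⟨hyL, (h | ⟨h1, h2⟩)⟩
      · exact Or.inl ⟨h, hyL⟩
      · exact Or.inr ⟨h1, by rw [hL] at hyL; exact hyL, h2⟩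
    · rintro (⟨h1, h2⟩ | ⟨h1, h2, h3⟩)
      · exact ⟨h2, Or.inl h1⟩
      · exact ⟨by rw [hL]; exact h2, Or.inr ⟨h1, h3⟩⟩
  unfold valS
  rw [hsplit, Set.ncard_union_eq ?_ (finite_len_lt _ _) (finite_len_eq _ _),
    ncard_lt_len δ F L q0 hL, Nlt_eq]
  rw [Set.disjoint_left]
  rintro y ⟨h1, _⟩ ⟨h2, _⟩
  omega

end NltSec

section Koenig

set_option linter.unusedSectionVars false

variable {Γ : Type*} [Fintype Γ] [LinearOrder Γ]

lemma prefixOf_add (w : ℕ → Γ) (m k : ℕ) :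
    prefixOf w (m + k) = prefixOf w m ++ List.ofFn (fun i : Fin k => w (m + i)) := by
  unfold prefixOf
  rw [List.ofFn_add]
  rfl

lemma prefixOf_length (w : ℕ → Γ) (ℓ : ℕ) : (prefixOf w ℓ).length = ℓ := by
  simp [prefixOf]

lemma prefixOf_prefix (w : ℕ → Γ) {m n : ℕ} (h : m ≤ n) :
    prefixOf w m <+: prefixOf w n := by
  obtain ⟨k, rfl⟩ := Nat.exists_eq_add_of_le h
  rw [prefixOf_add]
  exact List.prefix_append _ _

def live (L : Set (List Γ)) (x : List Γ) : Prop :=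
  ∀ m : ℕ, ∃ z : List Γ, z.length = m ∧ x ++ z ∈ L

lemma live_mem {L : Set (List Γ)} {x : List Γ} (h : live L x) : x ∈ L := by
  obtain ⟨z, hz, hzL⟩ := h 0
  rw [List.length_eq_zero_iff] at hz
  simpa [hz] using hzL

lemma live_step {L : Set (List Γ)} (hpc : pref L = L) {x : List Γ} (h : live L x) :
    ∃ a : Γ, live L (x ++ [a]) := by
  by_contra hc
  push_neg at hc
  simp only [live, not_forall] at hc
  choose m hm using hc
  obtain ⟨z, hz, hzL⟩ := h (Finset.univ.sup m + 1)
  match z, hz with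
  | a :: t, hz =>
    have ht : t.length = Finset.univ.sup m := by simpa using hz
    have hma : m a ≤ t.length := ht ▸ Finset.le_sup (Finset.mem_univ a)
    apply hm a
    refine ⟨t.take (m a), by rw [List.length_take]; omega, ?_⟩
    rw [← hpc]
    refine ⟨x ++ a :: t, hzL, ⟨t.drop (m a), ?_⟩⟩
    simp [List.append_assoc]

noncomputable def chain {L : Set (List Γ)} (hpc : pref L = L) {x : List Γ}
    (hx : live L x) : (n : ℕ) → {p : List Γ // p.length = n ∧ live L (x ++ p)}
  | 0 => ⟨[], rfl, by simpa using hx⟩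
  | n + 1 =>
      let c := chain hpc hx n
      ⟨c.1 ++ [(live_step hpc c.2.2).choose], by simp [c.2.1], by
        have h := (live_step hpc c.2.2).choose_spec
        rwa [List.append_assoc] at h⟩

lemma chain_prefix {L : Set (List Γ)} (hpc : pref L = L) {x : List Γ}
    (hx : live L x) {n m : ℕ} (h : n ≤ m) :
    (chain hpc hx n).1 <+: (chain hpc hx m).1 := by
  induction m with
  | zero => rw [Nat.le_zero.mp h]
  | succ m ih =>
    rcases Nat.lt_succ_iff_lt_or_eq.mp (Nat.lt_succ_of_le h) with h' | rfl
    · refine (ih (by omega)).trans ?_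
      exact ⟨_, rfl⟩
    · exact List.prefix_rfl

noncomputable def extWord {L : Set (List Γ)} (hpc : pref L = L) {x : List Γ}
    (hx : live L x) : ℕ → Γ :=
  fun i =>
    if h : i < x.length then x[i]
    else ((chain hpc hx (i + 1 - x.length)).1)[i - x.length]'(by
      have := (chain hpc hx (i + 1 - x.length)).2.1
      omega)

lemma extWord_prefix {L : Set (List Γ)} (hpc : pref L = L) {x : List Γ}
    (hx : live L x) (n : ℕ) :
    prefixOf (extWord hpc hx) (x.length + n) = x ++ (chain hpc hx n).1 := by
  apply List.ext_getElem
  · rw [prefixOf_length]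
    simp [(chain hpc hx n).2.1]
  intro i h1 h2
  rw [prefixOf_length] at h1
  have hofn : (prefixOf (extWord hpc hx) (x.length + n))[i] = extWord hpc hx i := by
    simp [prefixOf]
  rw [hofn]
  by_cases hi : i < x.length
  · rw [List.getElem_append_left hi]
    simp [extWord, hi]
  · have hi' : x.length ≤ i := by omega
    rw [List.getElem_append_right hi']
    have hlt : i - x.length < ((chain hpc hx (i + 1 - x.length)).1).length := by
      rw [(chain hpc hx (i + 1 - x.length)).2.1]; omega
    have : extWord hpc hx i = ((chain hpc hx (i + 1 - x.length)).1)[i - x.length]'hlt := by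
      simp [extWord, hi]
    rw [this]
    exact List.IsPrefix.getElem (chain_prefix hpc hx (by omega)) hlt

lemma live_centre {L : Set (List Γ)} (hpc : pref L = L) {x : List Γ}
    (hx : live L x) : x ∈ centre L := by
  refine ⟨extWord hpc hx, ?_, ?_⟩
  · intro ℓ
    refine ⟨x ++ (chain hpc hx ℓ).1, live_mem (chain hpc hx ℓ).2.2, ?_⟩
    have h1 : prefixOf (extWord hpc hx) ℓ <+: prefixOf (extWord hpc hx) (x.length + ℓ) :=
      prefixOf_prefix _ (by omega)
    rwa [extWord_prefix hpc hx ℓ] at h1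
  · have h0 := extWord_prefix hpc hx 0
    have : (chain hpc hx 0).1 = [] := rfl
    rw [this, List.append_nil] at h0
    simpa using h0.symm

end Koenig

section Analytic

set_option linter.unusedSectionVars false

variable {Γ : Type*} [Fintype Γ] [LinearOrder Γ] {Q : Type*} (δ : Q → Γ → Q) (F : Set Q)

lemma ofFn_consEquiv {m : ℕ} (p : Γ × (Fin m → Γ)) :
    List.ofFn ((Fin.consEquiv fun _ => Γ) p) = p.1 :: List.ofFn p.2 := by
  rw [List.ofFn_succ]
  simp [Fin.consEquiv]

lemma deltaStar_append (q : Q) (x y : List Γ) :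
    deltaStar δ q (x ++ y) = deltaStar δ (deltaStar δ q x) y := by
  simp [deltaStar, List.foldl_append]

noncomputable def Gfun (r : List Γ → ℝ) : List Γ → List Γ → ℝ
  | _, [] => 0
  | p, c :: t => (∑ a ∈ Finset.univ.filter (· < c), r (p ++ [a])) + Gfun r (p ++ [c]) t

noncomputable def Hd (q : Q) : List Γ → ℕ → ℕ
  | [], _ => 0
  | c :: t, m =>
      (∑ a ∈ Finset.univ.filter (· < c), ucomp δ F (δ q a) (t.length + m)) + Hd (δ q c) t m

lemma Nlt_append (q : Q) (p s : List Γ) :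
    Nlt δ F q (p ++ s) = Hd δ F q p s.length + Nlt δ F (deltaStar δ q p) s := by
  induction p generalizing q with
  | nil => simp [Hd, deltaStar]
  | cons c t ih =>
    show (∑ a ∈ Finset.univ.filter (· < c), ucomp δ F (δ q a) (t ++ s).length)
        + Nlt δ F (δ q c) (t ++ s)
      = ((∑ a ∈ Finset.univ.filter (· < c), ucomp δ F (δ q a) (t.length + s.length))
        + Hd δ F (δ q c) t s.length) + Nlt δ F (deltaStar δ (δ q c) t) s
    rw [List.length_append, ih (δ q c), add_assoc]

lemma Nlt_le (q : Q) (x : List Γ) : Nlt δ F q x ≤ ucomp δ F q x.length := by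
  induction x generalizing q with
  | nil => simp [Nlt]
  | cons c t ih =>
    show (∑ a ∈ Finset.univ.filter (· < c), ucomp δ F (δ q a) t.length) + Nlt δ F (δ q c) t
      ≤ ucomp δ F q (t.length + 1)
    rw [ucomp_succ]
    calc (∑ a ∈ Finset.univ.filter (· < c), ucomp δ F (δ q a) t.length) + Nlt δ F (δ q c) t
        ≤ (∑ a ∈ Finset.univ.filter (· < c), ucomp δ F (δ q a) t.length)
            + ucomp δ F (δ q c) t.length := by
          exact Nat.add_le_add_left (ih (δ q c)) _
      _ = ∑ a ∈ insert c (Finset.univ.filter (· < c)), ucomp δ F (δ q a) t.length := by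
          rw [Finset.sum_insert (by simp)]
          omega
      _ ≤ ∑ a : Γ, ucomp δ F (δ q a) t.length :=
          Finset.sum_le_sum_of_subset (Finset.subset_univ _)

end Analytic

section RLemmas

set_option linter.unusedSectionVars false

open Filter Topology

variable {Γ : Type*} [Fintype Γ] [LinearOrder Γ] {Q : Type*} (δ : Q → Γ → Q) (F : Set Q)
variable (q0 : Q) (r : List Γ → ℝ)
variable (hH2 : ∀ x : List Γ,
      Tendsto (fun n : ℕ =>
          (ucomp δ F (deltaStar δ q0 x) (n - x.length) : ℝ) / (vcomp δ F q0 n : ℝ))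
        atTop (𝓝 (r x)))

include hH2

lemma r_nonneg (x : List Γ) : 0 ≤ r x :=
  ge_of_tendsto' (hH2 x) fun n => by positivity

lemma r_split (x : List Γ) : r x = ∑ a : Γ, r (x ++ [a]) := by
  have h2 : Tendsto (fun n : ℕ => ∑ a : Γ,
      (ucomp δ F (deltaStar δ q0 (x ++ [a])) (n - (x ++ [a]).length) : ℝ)
        / (vcomp δ F q0 n : ℝ)) atTop (𝓝 (∑ a : Γ, r (x ++ [a]))) :=
    tendsto_finset_sum _ fun a _ => hH2 (x ++ [a])
  refine tendsto_nhds_unique (hH2 x) (h2.congr' ?_)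
  filter_upwards [eventually_ge_atTop (x.length + 1)] with n hn
  have harg : n - x.length = (n - (x.length + 1)) + 1 := by omega
  rw [← Finset.sum_div]
  congr 1
  rw [harg, ucomp_succ]
  push_cast
  refine Finset.sum_congr rfl fun a _ => ?_
  rw [deltaStar_append]
  have : (x ++ [a]).length = x.length + 1 := by simp
  rw [this]
  rfl

lemma sum_r_ext : ∀ (m : ℕ) (z : List Γ), (∑ f : Fin m → Γ, r (z ++ List.ofFn f)) = r z := by
  intro m
  induction m with
  | zero =>
    intro z
    simp [List.ofFn_zero]
  | succ m ih =>
    intro z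
    have step := Fintype.sum_equiv (Fin.consEquiv fun _ => Γ)
      (fun p : Γ × (Fin m → Γ) => r (z ++ (p.1 :: List.ofFn p.2)))
      (fun f : Fin (m+1) → Γ => r (z ++ List.ofFn f))
      (fun p => by rw [ofFn_consEquiv p])
    rw [← step, Fintype.sum_prod_type]
    have hinner : ∀ a : Γ, (∑ g : Fin m → Γ, r (z ++ (a :: List.ofFn g))) = r (z ++ [a]) := by
      intro a
      rw [← ih (z ++ [a])]
      refine Finset.sum_congr rfl fun g _ => ?_
      congr 1
      simp
    rw [Finset.sum_congr rfl fun a _ => hinner a]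
    exact (r_split δ F q0 r hH2 z).symm

end RLemmas

section RLemmas2

set_option linter.unusedSectionVars false

open Filter Topology

variable {Γ : Type*} [Fintype Γ] [LinearOrder Γ] {Q : Type*} (δ : Q → Γ → Q) (F : Set Q)
variable (q0 : Q) (r : List Γ → ℝ)
variable (hH2 : ∀ x : List Γ,
      Tendsto (fun n : ℕ =>
          (ucomp δ F (deltaStar δ q0 x) (n - x.length) : ℝ) / (vcomp δ F q0 n : ℝ))
        atTop (𝓝 (r x)))

include hH2

open scoped Classical in
lemma lex_sum : ∀ (y p : List Γ),
    (∑ f : Fin y.length → Γ,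
      if List.Lex (· < ·) (List.ofFn f) y then r (p ++ List.ofFn f) else 0) = Gfun r p y := by
  intro y
  induction y with
  | nil =>
    intro p
    simp [Gfun]
  | cons c t ih =>
    intro p
    show (∑ f : Fin (t.length + 1) → Γ,
      if List.Lex (· < ·) (List.ofFn f) (c :: t) then r (p ++ List.ofFn f) else 0) = _
    have step := Fintype.sum_equiv (Fin.consEquiv fun _ => Γ)
      (fun q : Γ × (Fin t.length → Γ) =>
        if List.Lex (· < ·) (q.1 :: List.ofFn q.2) (c :: t) then r (p ++ (q.1 :: List.ofFn q.2))
        else 0)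
      (fun f : Fin (t.length + 1) → Γ =>
        if List.Lex (· < ·) (List.ofFn f) (c :: t) then r (p ++ List.ofFn f) else 0)
      (fun q => by rw [ofFn_consEquiv q])
    rw [← step, Fintype.sum_prod_type]
    have hinner : ∀ a : Γ,
        (∑ g : Fin t.length → Γ,
          if List.Lex (· < ·) (a :: List.ofFn g) (c :: t) then r (p ++ (a :: List.ofFn g)) else 0)
        = if a < c then r (p ++ [a]) else if a = c then Gfun r (p ++ [c]) t else 0 := by
      intro a
      by_cases hac : a < c
      · rw [if_pos hac]
        have hterm : ∀ g : Fin t.length → Γ,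
            (if List.Lex (· < ·) (a :: List.ofFn g) (c :: t) then r (p ++ (a :: List.ofFn g))
              else 0) = r ((p ++ [a]) ++ List.ofFn g) := by
          intro g
          rw [if_pos (List.Lex.rel hac)]
          congr 1
          simp
        rw [Finset.sum_congr rfl fun g _ => hterm g, sum_r_ext δ F q0 r hH2]
      · by_cases haec : a = c
        · subst haec
          rw [if_neg hac, if_pos rfl, ← ih (p ++ [a])]
          refine Finset.sum_congr rfl fun g _ => ?_
          have hcond : List.Lex (· < ·) (a :: List.ofFn g) (a :: t)
              ↔ List.Lex (· < ·) (List.ofFn g) t := by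
            rw [lex_cons_cons_iff]
            simp [hac]
          by_cases hl : List.Lex (· < ·) (List.ofFn g) t
          · rw [if_pos (hcond.2 hl), if_pos hl]
            congr 1
            simp
          · rw [if_neg (fun h => hl (hcond.1 h)), if_neg hl]
        · rw [if_neg hac, if_neg haec]
          refine Finset.sum_eq_zero fun g _ => ?_
          rw [if_neg]
          rw [lex_cons_cons_iff]
          tauto
    rw [Finset.sum_congr rfl fun a _ => hinner a, sum_split]
    rfl

open scoped Classical in
lemma alpha_eq (L : Set (List Γ)) (hr0 : ∀ x : List Γ, x ∉ centre L → r x = 0) (y : List Γ) :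
    alphaFin L r y = (1 - r []) + Gfun r [] y := by
  unfold alphaFin
  congr 1
  rw [← lex_sum δ F q0 r hH2 y []]
  refine Finset.sum_congr rfl fun f _ => ?_
  by_cases hl : List.Lex (· < ·) (List.ofFn f) y
  · by_cases hc : List.ofFn f ∈ centre L
    · rw [if_pos ⟨hc, hl⟩, if_pos hl, List.nil_append]
    · rw [if_neg (fun h => hc h.1), if_pos hl, List.nil_append, hr0 _ hc]
  · rw [if_neg (fun h => hl h.2), if_neg hl]

lemma Gfun_nonneg : ∀ (y p : List Γ), 0 ≤ Gfun r p y := by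
  intro y
  induction y with
  | nil => intro p; simp [Gfun]
  | cons c t ih =>
    intro p
    have h1 : (0:ℝ) ≤ ∑ a ∈ Finset.univ.filter (· < c), r (p ++ [a]) :=
      Finset.sum_nonneg fun a _ => r_nonneg δ F q0 r hH2 _
    have h2 := ih (p ++ [c])
    show 0 ≤ (∑ a ∈ Finset.univ.filter (· < c), r (p ++ [a])) + Gfun r (p ++ [c]) t
    linarith

lemma Gfun_le : ∀ (y p : List Γ), Gfun r p y ≤ r p := by
  intro y
  induction y with
  | nil =>
    intro p
    show (0:ℝ) ≤ r p
    exact r_nonneg δ F q0 r hH2 p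
  | cons c t ih =>
    intro p
    show (∑ a ∈ Finset.univ.filter (· < c), r (p ++ [a])) + Gfun r (p ++ [c]) t ≤ r p
    have h1 : (∑ a ∈ Finset.univ.filter (· < c), r (p ++ [a])) + Gfun r (p ++ [c]) t
        ≤ (∑ a ∈ Finset.univ.filter (· < c), r (p ++ [a])) + r (p ++ [c]) := by
      have := ih (p ++ [c])
      linarith
    have h2 : (∑ a ∈ Finset.univ.filter (· < c), r (p ++ [a])) + r (p ++ [c])
        = ∑ a ∈ insert c (Finset.univ.filter (· < c)), r (p ++ [a]) := by
      rw [Finset.sum_insert (by simp)]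
      ring
    have h3 : (∑ a ∈ insert c (Finset.univ.filter (· < c)), r (p ++ [a]))
        ≤ ∑ a : Γ, r (p ++ [a]) :=
      Finset.sum_le_sum_of_subset_of_nonneg (Finset.subset_univ _)
        (fun a _ _ => r_nonneg δ F q0 r hH2 _)
    rw [r_split δ F q0 r hH2 p]
    linarith

omit hH2 in
lemma Gfun_append : ∀ (t s p : List Γ), Gfun r p (t ++ s) = Gfun r p t + Gfun r (p ++ t) s := by
  intro t
  induction t with
  | nil => intro s p; simp [Gfun]
  | cons c t ih =>
    intro s p
    show (∑ a ∈ Finset.univ.filter (· < c), r (p ++ [a])) + Gfun r (p ++ [c]) (t ++ s) = _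
    rw [ih s (p ++ [c])]
    show _ = ((∑ a ∈ Finset.univ.filter (· < c), r (p ++ [a])) + Gfun r (p ++ [c]) t)
      + Gfun r (p ++ (c :: t)) s
    have : (p ++ [c]) ++ t = p ++ (c :: t) := by simp
    rw [this, add_assoc]

lemma r_off (L : Set (List Γ)) (hpc : pref L = L)
    (hL : L = {x | deltaStar δ q0 x ∈ F}) (x : List Γ) (hx : x ∉ centre L) : r x = 0 := by
  have hnl : ¬ live L x := fun h => hx (live_centre hpc h)
  rw [live] at hnl
  push_neg at hnl
  obtain ⟨m, hm⟩ := hnl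
  refine tendsto_nhds_unique (hH2 x) (Tendsto.congr' ?_ tendsto_const_nhds)
  filter_upwards [eventually_ge_atTop (x.length + m)] with n hn
  have hempty : {z : List Γ | z.length = n - x.length
      ∧ deltaStar δ (deltaStar δ q0 x) z ∈ F} = ∅ := by
    ext z
    simp only [Set.mem_setOf_eq, Set.mem_empty_iff_false, iff_false, not_and]
    intro hlen hF
    have hmem : x ++ z ∈ L := by
      rw [hL]
      show deltaStar δ q0 (x ++ z) ∈ F
      rw [deltaStar_append]
      exact hF
    have htake : x ++ z.take m ∈ L := by
      rw [← hpc]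
      exact ⟨x ++ z, hmem, ⟨z.drop m, by simp⟩⟩
    exact hm (z.take m) (by rw [List.length_take]; omega) htake
  have : ucomp δ F (deltaStar δ q0 x) (n - x.length) = 0 := by
    unfold ucomp
    rw [hempty, Set.ncard_empty]
  simp [this]

end RLemmas2

section HdTendsto

set_option linter.unusedSectionVars false

open Filter Topology

variable {Γ : Type*} [Fintype Γ] [LinearOrder Γ] {Q : Type*} (δ : Q → Γ → Q) (F : Set Q)
variable (q0 : Q) (r : List Γ → ℝ)
variable (hH2 : ∀ x : List Γ,
      Tendsto (fun n : ℕ =>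
          (ucomp δ F (deltaStar δ q0 x) (n - x.length) : ℝ) / (vcomp δ F q0 n : ℝ))
        atTop (𝓝 (r x)))

include hH2

lemma Hd_tendsto (ℓf : ℕ → ℕ) (hℓ : Tendsto ℓf atTop atTop) :
    ∀ (p p' : List Γ),
      Tendsto (fun n : ℕ =>
          (Hd δ F (deltaStar δ q0 p') p (ℓf n - (p'.length + p.length)) : ℝ)
            / (vcomp δ F q0 (ℓf n) : ℝ))
        atTop (𝓝 (Gfun r p' p)) := by
  intro p
  induction p with
  | nil =>
    intro p'
    have : Gfun r p' [] = 0 := rfl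
    rw [this]
    have hz : ∀ n : ℕ, (Hd δ F (deltaStar δ q0 p') [] (ℓf n - (p'.length + 0)) : ℝ)
        / (vcomp δ F q0 (ℓf n) : ℝ) = 0 := by
      intro n
      show ((0 : ℕ) : ℝ) / _ = 0
      simp
    exact Tendsto.congr (fun n => (hz n).symm) tendsto_const_nhds
  | cons c t ih =>
    intro p'
    have hA : ∀ a : Γ, Tendsto (fun n : ℕ =>
        (ucomp δ F (δ (deltaStar δ q0 p') a)
            (t.length + (ℓf n - (p'.length + (c :: t).length))) : ℝ)
          / (vcomp δ F q0 (ℓf n) : ℝ)) atTop (𝓝 (r (p' ++ [a]))) := by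
      intro a
      have base := (hH2 (p' ++ [a])).comp hℓ
      refine Tendsto.congr' ?_ base
      filter_upwards [hℓ.eventually_ge_atTop (p'.length + t.length + 1)] with n hn
      have h1 : deltaStar δ q0 (p' ++ [a]) = δ (deltaStar δ q0 p') a := by
        rw [deltaStar_append]
        rfl
      have h2 : ℓf n - (p' ++ [a]).length
          = t.length + (ℓf n - (p'.length + (c :: t).length)) := by
        simp only [List.length_append, List.length_singleton, List.length_cons, List.length_nil]
        omega
      show (ucomp δ F (deltaStar δ q0 (p' ++ [a])) (ℓf n - (p' ++ [a]).length) : ℝ) / _ = _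
      rw [h1, h2]
    have hB' : Tendsto (fun n : ℕ =>
        (Hd δ F (δ (deltaStar δ q0 p') c) t (ℓf n - (p'.length + (c :: t).length)) : ℝ)
          / (vcomp δ F q0 (ℓf n) : ℝ)) atTop (𝓝 (Gfun r (p' ++ [c]) t)) := by
      refine Tendsto.congr (fun n => ?_) (ih (p' ++ [c]))
      have h1 : deltaStar δ q0 (p' ++ [c]) = δ (deltaStar δ q0 p') c := by
        rw [deltaStar_append]
        rfl
      have h2 : (p' ++ [c]).length + t.length = p'.length + (c :: t).length := by
        simp only [List.length_append, List.length_singleton, List.length_cons, List.length_nil]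
        omega
      rw [h1, h2]
    have hsum := (tendsto_finset_sum (Finset.univ.filter (· < c))
      (fun a _ => hA a)).add hB'
    have hval : (∑ a ∈ Finset.univ.filter (· < c), r (p' ++ [a])) + Gfun r (p' ++ [c]) t
        = Gfun r p' (c :: t) := rfl
    rw [hval] at hsum
    refine Tendsto.congr (fun n => ?_) hsum
    show _ = (Hd δ F (deltaStar δ q0 p') (c :: t) (ℓf n - (p'.length + (c :: t).length)) : ℝ)
      / (vcomp δ F q0 (ℓf n) : ℝ)
    have hunf : Hd δ F (deltaStar δ q0 p') (c :: t) (ℓf n - (p'.length + (c :: t).length))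
        = (∑ a ∈ Finset.univ.filter (· < c),
            ucomp δ F (δ (deltaStar δ q0 p') a)
              (t.length + (ℓf n - (p'.length + (c :: t).length))))
          + Hd δ F (δ (deltaStar δ q0 p') c) t (ℓf n - (p'.length + (c :: t).length)) := rfl
    rw [hunf]
    push_cast
    rw [add_div, Finset.sum_div]

end HdTendsto

theorem stmt_18 {Γ : Type*} [Fintype Γ] [LinearOrder Γ]
    (K : Set (List Γ)) (hK : K.Infinite)
    (L : Set (List Γ)) (hLdef : L = pref K) (hpc : pref L = L)
    {Q : Type*} (q0 : Q) (δ : Q → Γ → Q) (F : Set Q)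
    (hacc : ∀ q : Q, ∃ x : List Γ, deltaStar δ q0 x = q)
    (hL : L = {x | deltaStar δ q0 x ∈ F})
    (r : List Γ → ℝ)
    (hH2 : ∀ x : List Γ,
      Tendsto (fun n : ℕ =>
          (ucomp δ F (deltaStar δ q0 x) (n - x.length) : ℝ) / (vcomp δ F q0 n : ℝ))
        atTop (𝓝 (r x)))
    (hH3 : ∀ w ∈ adh L, Tendsto (fun ℓ : ℕ => r (prefixOf w ℓ)) atTop (𝓝 0))
    (ws : ℕ → List Γ) (hws : ∀ n, ws n ∈ K)
    (w : ℕ → Γ)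
    (hconv : ∀ ℓ : ℕ, ∃ N : ℕ, ∀ n ≥ N, prefixOf w ℓ <+: ws n)
    (aw : ℝ)
    (haw : Tendsto (fun ℓ : ℕ => alphaFin L r (prefixOf w ℓ)) atTop (𝓝 aw)) :
    Tendsto (fun n : ℕ => (valS L (ws n) : ℝ) / (vcomp δ F q0 (ws n).length : ℝ))
      atTop (𝓝 aw) := by
  classical
  -- basic positivity facts
  have hnilL : ([] : List Γ) ∈ L := by
    rw [hLdef]
    obtain ⟨k, hk⟩ := hK.nonempty
    exact ⟨k, hk, List.nil_prefix⟩
  have hq0F : q0 ∈ F := by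
    rw [hL] at hnilL
    exact hnilL
  have hv1 : ∀ n, 1 ≤ vcomp δ F q0 n := by
    intro n
    have h0 : ucomp δ F q0 0 = 1 := by rw [ucomp_zero, if_pos hq0F]
    calc 1 = ucomp δ F q0 0 := h0.symm
      _ ≤ vcomp δ F q0 n :=
        Finset.single_le_sum (f := fun m => ucomp δ F q0 m)
          (fun i _ => Nat.zero_le _) (Finset.mem_range.2 (Nat.succ_pos n))
  have hvpos : ∀ n, (0:ℝ) < (vcomp δ F q0 n : ℝ) := by
    intro n
    have := hv1 n
    exact_mod_cast Nat.lt_of_lt_of_le Nat.zero_lt_one this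
  -- lengths tend to infinity
  have hℓ : Tendsto (fun n => (ws n).length) atTop atTop := by
    rw [tendsto_atTop_atTop]
    intro b
    obtain ⟨N, hN⟩ := hconv b
    refine ⟨N, fun n hn => ?_⟩
    have := (hN n hn).length_le
    rwa [prefixOf_length] at this
  -- w is in the adherence
  have hwadh : w ∈ adh L := by
    intro ℓ
    obtain ⟨N, hN⟩ := hconv ℓ
    have hwsL : ws N ∈ L := by
      rw [hLdef]
      exact ⟨ws N, hws N, List.prefix_refl _⟩
    exact ⟨ws N, hwsL, hN N le_rfl⟩
  -- r vanishes off the centre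
  have hr0 : ∀ x : List Γ, x ∉ centre L → r x = 0 := fun x hx =>
    r_off δ F q0 r hH2 L hpc hL x hx
  have halpha : ∀ y, alphaFin L r y = (1 - r []) + Gfun r [] y := fun y =>
    alpha_eq δ F q0 r hH2 L hr0 y
  set Gi := aw - (1 - r []) with hGidef
  have hGconv : Tendsto (fun ℓ : ℕ => Gfun r [] (prefixOf w ℓ)) atTop (𝓝 Gi) := by
    have h := haw.sub_const (1 - r [])
    refine Tendsto.congr (fun ℓ => ?_) h
    rw [halpha]
    ring
  -- decomposition of valS / v
  have hdecomp : ∀ n : ℕ, (valS L (ws n) : ℝ) / (vcomp δ F q0 (ws n).length : ℝ)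
      = (1 - (ucomp δ F q0 ((ws n).length) : ℝ) / (vcomp δ F q0 (ws n).length : ℝ))
        + (Nlt δ F q0 (ws n) : ℝ) / (vcomp δ F q0 (ws n).length : ℝ) := by
    intro n
    have hne : (vcomp δ F q0 (ws n).length : ℝ) ≠ 0 := (hvpos _).ne'
    have hvsum : (vcomp δ F q0 (ws n).length : ℝ)
        = (∑ m ∈ Finset.range (ws n).length, (ucomp δ F q0 m : ℝ))
          + (ucomp δ F q0 (ws n).length : ℝ) := by
      have : vcomp δ F q0 (ws n).length
          = ∑ m ∈ Finset.range ((ws n).length + 1), ucomp δ F q0 m := rfl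
      rw [this, Finset.sum_range_succ]
      push_cast
      ring
    rw [valS_eq δ F L q0 hL (ws n)]
    push_cast
    rw [add_div]
    congr 1
    rw [eq_sub_iff_add_eq, ← add_div, div_eq_one_iff_eq hne, hvsum]
  -- the main limit for Nlt / v
  have hNlt : Tendsto (fun n : ℕ =>
      (Nlt δ F q0 (ws n) : ℝ) / (vcomp δ F q0 (ws n).length : ℝ)) atTop (𝓝 Gi) := by
    rw [Metric.tendsto_nhds]
    intro ε hε
    -- choose a long enough prefix
    have hsmall : ∀ᶠ ℓ in atTop, r (prefixOf w ℓ) < ε/4 :=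
      (hH3 w hwadh).eventually_lt_const (by positivity)
    obtain ⟨L₀, hL₀⟩ := hsmall.exists
    set P₀ := prefixOf w L₀ with hP₀def
    have hlenP₀ : P₀.length = L₀ := prefixOf_length w L₀
    have hrP₀nn : 0 ≤ r P₀ := r_nonneg δ F q0 r hH2 P₀
    set G₀ := Gfun r [] P₀ with hG₀def
    -- bounds for Gi against G₀
    have hGtail : Tendsto (fun k : ℕ => G₀ + Gfun r P₀ (List.ofFn fun i : Fin k => w (L₀ + i)))
        atTop (𝓝 Gi) := by
      have hmono : Tendsto (fun k : ℕ => L₀ + k) atTop atTop :=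
        tendsto_atTop_atTop.2 fun b => ⟨b, fun n hn => by omega⟩
      have hcomp := hGconv.comp hmono
      refine Tendsto.congr (fun k => ?_) hcomp
      show Gfun r [] (prefixOf w (L₀ + k)) = _
      rw [prefixOf_add, Gfun_append r, List.nil_append]
    have hlb : G₀ ≤ Gi :=
      ge_of_tendsto' hGtail fun k => by
        have := Gfun_nonneg δ F q0 r hH2 (List.ofFn fun i : Fin k => w (L₀ + i)) P₀
        linarith
    have hub : Gi ≤ G₀ + r P₀ :=
      le_of_tendsto' hGtail fun k => by
        have := Gfun_le δ F q0 r hH2 (List.ofFn fun i : Fin k => w (L₀ + i)) P₀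
        linarith
    -- head part converges
    have hHd' : Tendsto (fun n : ℕ =>
        (Hd δ F q0 P₀ ((ws n).length - L₀) : ℝ) / (vcomp δ F q0 (ws n).length : ℝ))
        atTop (𝓝 G₀) := by
      have h := Hd_tendsto δ F q0 r hH2 (fun n => (ws n).length) hℓ P₀ []
      refine Tendsto.congr (fun n => ?_) h
      have h1 : deltaStar δ q0 [] = q0 := rfl
      have h2 : ([] : List Γ).length + P₀.length = L₀ := by simp [hlenP₀]
      rw [h1, h2]
    have ev1 : ∀ᶠ n in atTop, prefixOf w L₀ <+: ws n := eventually_atTop.2 (hconv L₀)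
    have ev2 : ∀ᶠ n in atTop, dist ((Hd δ F q0 P₀ ((ws n).length - L₀) : ℝ)
        / (vcomp δ F q0 (ws n).length : ℝ)) G₀ < ε/4 :=
      Metric.tendsto_nhds.mp hHd' (ε/4) (by positivity)
    have ev3 : ∀ᶠ n in atTop, (ucomp δ F (deltaStar δ q0 P₀) ((ws n).length - L₀) : ℝ)
        / (vcomp δ F q0 (ws n).length : ℝ) < r P₀ + ε/4 := by
      have htail := (hH2 P₀).comp hℓ
      rw [hlenP₀] at htail
      exact htail.eventually_lt_const (by linarith)
    filter_upwards [ev1, ev2, ev3] with n h1 h2 h3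
    obtain ⟨s, hs⟩ := h1
    have hsws : ws n = P₀ ++ s := hs.symm
    have hslen : s.length = (ws n).length - L₀ := by
      have := congrArg List.length hs
      rw [List.length_append, hlenP₀] at this
      omega
    have hNdecomp : Nlt δ F q0 (ws n)
        = Hd δ F q0 P₀ s.length + Nlt δ F (deltaStar δ q0 P₀) s := by
      rw [hsws, Nlt_append]
    have htle : Nlt δ F (deltaStar δ q0 P₀) s
        ≤ ucomp δ F (deltaStar δ q0 P₀) ((ws n).length - L₀) := by
      rw [← hslen]
      exact Nlt_le δ F _ s
    have hv := hvpos (ws n).length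
    have split : (Nlt δ F q0 (ws n) : ℝ) / (vcomp δ F q0 (ws n).length : ℝ)
        = (Hd δ F q0 P₀ ((ws n).length - L₀) : ℝ) / (vcomp δ F q0 (ws n).length : ℝ)
          + (Nlt δ F (deltaStar δ q0 P₀) s : ℝ) / (vcomp δ F q0 (ws n).length : ℝ) := by
      rw [hNdecomp, hslen]
      push_cast
      rw [add_div]
    have hT1 : 0 ≤ (Nlt δ F (deltaStar δ q0 P₀) s : ℝ) / (vcomp δ F q0 (ws n).length : ℝ) := by
      positivity
    have hT2 : (Nlt δ F (deltaStar δ q0 P₀) s : ℝ) / (vcomp δ F q0 (ws n).length : ℝ)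
        ≤ (ucomp δ F (deltaStar δ q0 P₀) ((ws n).length - L₀) : ℝ)
          / (vcomp δ F q0 (ws n).length : ℝ) := by
      have : (Nlt δ F (deltaStar δ q0 P₀) s : ℝ)
          ≤ (ucomp δ F (deltaStar δ q0 P₀) ((ws n).length - L₀) : ℝ) := by
        exact_mod_cast htle
      exact (div_le_div_iff_of_pos_right hv).2 this
    rw [Real.dist_eq]
    have e1 : (Nlt δ F q0 (ws n) : ℝ) / (vcomp δ F q0 (ws n).length : ℝ) - Gi
        = ((Hd δ F q0 P₀ ((ws n).length - L₀) : ℝ) / (vcomp δ F q0 (ws n).length : ℝ) - G₀)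
          + ((Nlt δ F (deltaStar δ q0 P₀) s : ℝ) / (vcomp δ F q0 (ws n).length : ℝ))
          + (G₀ - Gi) := by
      rw [split]
      ring
    have a1 : |(Hd δ F q0 P₀ ((ws n).length - L₀) : ℝ) / (vcomp δ F q0 (ws n).length : ℝ)
        - G₀| < ε/4 := by
      rw [Real.dist_eq] at h2
      exact h2
    have a2 : |(Nlt δ F (deltaStar δ q0 P₀) s : ℝ) / (vcomp δ F q0 (ws n).length : ℝ)|
        < r P₀ + ε/4 := by
      rw [abs_of_nonneg hT1]
      exact lt_of_le_of_lt hT2 h3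
    have a3 : |G₀ - Gi| ≤ r P₀ := abs_le.2 ⟨by linarith, by linarith⟩
    calc |(Nlt δ F q0 (ws n) : ℝ) / (vcomp δ F q0 (ws n).length : ℝ) - Gi|
        = |((Hd δ F q0 P₀ ((ws n).length - L₀) : ℝ) / (vcomp δ F q0 (ws n).length : ℝ) - G₀)
          + ((Nlt δ F (deltaStar δ q0 P₀) s : ℝ) / (vcomp δ F q0 (ws n).length : ℝ))
          + (G₀ - Gi)| := by rw [e1]
      _ ≤ _ := abs_add_three _ _ _
      _ < ε := by linarith [hL₀]
  -- final assembly
  have hu : Tendsto (fun n : ℕ => (ucomp δ F q0 (ws n).length : ℝ)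
      / (vcomp δ F q0 (ws n).length : ℝ)) atTop (𝓝 (r [])) := by
    have h := (hH2 []).comp hℓ
    refine Tendsto.congr (fun n => ?_) h
    show (ucomp δ F (deltaStar δ q0 []) ((ws n).length - ([] : List Γ).length) : ℝ) / _ = _
    norm_num [deltaStar]
  have hfinal := ((tendsto_const_nhds (x := (1:ℝ)) (f := atTop)).sub hu).add hNlt
  have hlim : (1 - r []) + Gi = aw := by rw [hGidef]; ring
  rw [hlim] at hfinal
  exact Tendsto.congr (fun n => (hdecomp n).symm) hfinal
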